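/- Let p be a prime and for each positive integer m not divisible by p set S_m = ∑_{k=1}^{p-1} B_k · ((-m)⁻¹)^k ∈ ZMod p. Then for every m with 1 ≤ m ≤ p-2 one has m · S_m = S_1 − S_{m+1} in ZMod p. -/

import Mathlib

/-- The Bell numbers: `bell n` is the number of partitions of an `n`-element set,
determined by `bell 0 = 1` and `bell (n+1) = ∑_{k=0}^{n} C(n,k) * bell k`. -/
def bell : ℕ → ℕ
  | 0 => 1
  | n + 1 => ∑ k ∈ (Finset.range (n + 1)).attach, n.choose k * bell k
decreasing_by exact Finset.mem_range.mp k.2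

namespace BellSumAux

open Polynomial Finset

theorem bell_succ (n : ℕ) :
    bell (n + 1) = ∑ k ∈ Finset.range (n + 1), n.choose k * bell k := by
  rw [bell]
  exact Finset.sum_attach (Finset.range (n + 1)) fun k => n.choose k * bell k

variable (p : ℕ)

/-- The umbral functional `L (∑ cₙ Xⁿ) = ∑ cₙ Bₙ`. -/
noncomputable def L (f : Polynomial (ZMod p)) : ZMod p := f.sum fun n c => c * bell n

theorem L_zero : L p 0 = 0 := Polynomial.sum_zero_index _

theorem L_add (f g : Polynomial (ZMod p)) : L p (f + g) = L p f + L p g :=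
  Polynomial.sum_add_index f g _ (fun _ => zero_mul _) (fun _ b c => add_mul b c _)

theorem L_monomial (n : ℕ) (a : ZMod p) : L p (monomial n a) = a * bell n :=
  Polynomial.sum_monomial_index a _ (zero_mul _)

theorem L_C_mul (a : ZMod p) (f : Polynomial (ZMod p)) : L p (C a * f) = a * L p f := by
  have h := Polynomial.sum_smul_index f a (fun n c => (c * bell n : ZMod p)) (fun i => zero_mul _)
  rw [smul_eq_C_mul] at h
  rw [L, h, L, Polynomial.sum_def, Polynomial.sum_def, Finset.mul_sum]
  exact Finset.sum_congr rfl fun i _ => mul_assoc _ _ _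

theorem L_Xpow (n : ℕ) : L p (X ^ n) = bell n := by
  rw [X_pow_eq_monomial, L_monomial, one_mul]

theorem L_one : L p 1 = 1 := by
  have := L_Xpow p 0
  simpa [bell] using this

theorem L_X : L p X = 1 := by
  have := L_Xpow p 1
  simpa [bell_succ, bell] using this

theorem L_sum {ι : Type*} (s : Finset ι) (f : ι → Polynomial (ZMod p)) :
    L p (∑ i ∈ s, f i) = ∑ i ∈ s, L p (f i) := by
  classical
  induction s using Finset.induction with
  | empty => simp [L_zero]
  | insert _ _ h ih => rw [Finset.sum_insert h, Finset.sum_insert h, L_add, ih]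

theorem L_neg (f : Polynomial (ZMod p)) : L p (-f) = - L p f := by
  have := L_add p f (-f)
  rw [add_neg_cancel, L_zero] at this
  linear_combination -this

theorem L_sub (f g : Polynomial (ZMod p)) : L p (f - g) = L p f - L p g := by
  rw [sub_eq_add_neg, L_add, L_neg, sub_eq_add_neg]

theorem bell_succ_cast (n : ℕ) :
    (bell (n + 1) : ZMod p) = ∑ k ∈ Finset.range (n + 1), (n.choose k : ZMod p) * bell k := by
  rw [bell_succ]
  push_cast
  rfl

/-- The key umbral recursion: `L (X * f) = L (f (X + 1))`. -/
theorem L_shift (f : Polynomial (ZMod p)) : L p (X * f) = L p (f.comp (X + 1)) := by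
  induction f using Polynomial.induction_on' with
  | add f g hf hg => rw [mul_add, add_comp, L_add, L_add, hf, hg]
  | monomial n a =>
    have h1 : (X : Polynomial (ZMod p)) * monomial n a = monomial (n + 1) a := by
      rw [← C_mul_X_pow_eq_monomial, ← C_mul_X_pow_eq_monomial, pow_succ]
      ring
    have h2 : (monomial n a : Polynomial (ZMod p)).comp (X + 1)
        = ∑ k ∈ Finset.range (n + 1), monomial k (a * (n.choose k : ZMod p)) := by
      rw [← C_mul_X_pow_eq_monomial, mul_comp, C_comp, pow_comp, X_comp,
        add_pow, Finset.mul_sum]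
      refine Finset.sum_congr rfl fun k hk => ?_
      rw [← C_mul_X_pow_eq_monomial, one_pow, mul_one, ← C_eq_natCast, map_mul]
      ring
    rw [h1, h2, L_sum, L_monomial, bell_succ_cast, Finset.mul_sum]
    refine Finset.sum_congr rfl fun k hk => ?_
    rw [L_monomial]
    ring

/-- `L` applied to falling-factorial products. -/
theorem L_fall (j : ℕ) : L p (∏ i ∈ Finset.range j, (X - C (i : ZMod p))) = 1 := by
  induction j with
  | zero => simpa using L_one p
  | succ j ih =>
    have h0 : ∏ i ∈ Finset.range (j + 1), (X - C (i : ZMod p))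
        = X * ∏ i ∈ Finset.range j, (X - C ((i + 1 : ℕ) : ZMod p)) := by
      rw [Finset.prod_range_succ']
      simp [mul_comm]
    have hcomp : (∏ i ∈ Finset.range j, (X - C ((i + 1 : ℕ) : ZMod p))).comp (X + 1)
        = ∏ i ∈ Finset.range j, (X - C (i : ZMod p)) := by
      rw [Polynomial.prod_comp]
      refine Finset.prod_congr rfl fun i _ => ?_
      rw [sub_comp, X_comp, C_comp]
      have hc : ((i + 1 : ℕ) : ZMod p) = (i : ZMod p) + 1 := by push_cast; ring
      rw [hc, map_add, map_one]
      ring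
    rw [h0, L_shift, hcomp, ih]

end BellSumAux

namespace BellSumAux2

open Polynomial Finset BellSumAux

variable (p : ℕ) [hp : Fact p.Prime]

theorem bell_one : bell 1 = 1 := by
  rw [bell_succ]
  simp [bell]

theorem prod_univ_eq : (X ^ p - X : Polynomial (ZMod p)) = ∏ a : ZMod p, (X - C a) := by
  have hp1 : 1 < p := hp.out.one_lt
  have hmonic : (X ^ p - X : Polynomial (ZMod p)).Monic := by
    apply (monic_X_pow p).sub_of_left
    rw [degree_X_pow, degree_X]
    exact_mod_cast hp1
  have hcard : Fintype.card (ZMod p) = p := ZMod.card p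
  have hroots : (X ^ p - X : Polynomial (ZMod p)).roots = Finset.univ.val := by
    have h := FiniteField.roots_X_pow_card_sub_X (ZMod p)
    rwa [hcard] at h
  have hsplits : Splits (X ^ p - X : Polynomial (ZMod p)) := by
    rw [splits_iff_card_roots, hroots, FiniteField.X_pow_card_sub_X_natDegree_eq _ hp1]
    simpa using hcard
  calc (X ^ p - X : Polynomial (ZMod p))
      = (Multiset.map (fun a => X - C a) (X ^ p - X : Polynomial (ZMod p)).roots).prod :=
        hsplits.eq_prod_roots_of_monic hmonic
    _ = ∏ a : ZMod p, (X - C a) := by rw [hroots, Finset.prod_eq_multiset_prod]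

theorem prod_range_eq :
    (∏ i ∈ Finset.range p, (X - C (i : ZMod p)) : Polynomial (ZMod p)) = X ^ p - X := by
  haveI : NeZero p := ⟨hp.out.ne_zero⟩
  rw [prod_univ_eq p]
  refine Finset.prod_bij' (fun i _ => (i : ZMod p)) (fun a _ => a.val) ?_ ?_ ?_ ?_ ?_
  · intro i _; exact Finset.mem_univ _
  · intro a _; exact Finset.mem_range.mpr (ZMod.val_lt a)
  · intro i hi; exact ZMod.val_cast_of_lt (Finset.mem_range.mp hi)
  · intro a _; exact ZMod.natCast_rightInverse a
  · intro i _; rfl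

theorem bell_p : ((bell p : ZMod p)) = 2 := by
  have h := L_fall p p
  rw [prod_range_eq p, L_sub, L_Xpow, L_X] at h
  linear_combination h

noncomputable def qpoly (b : ZMod p) : Polynomial (ZMod p) :=
  ∑ j ∈ Finset.range (p - 1), C (b⁻¹ ^ (j + 1)) * X ^ (j + 1)

theorem L_qpoly (b : ZMod p) :
    L p (qpoly p b) = ∑ j ∈ Finset.range (p - 1), (bell (j + 1) : ZMod p) * b⁻¹ ^ (j + 1) := by
  rw [qpoly, L_sum]
  refine Finset.sum_congr rfl fun j _ => ?_
  rw [L_C_mul, L_Xpow]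
  ring

theorem X_sub_C_mul_qpoly (b : ZMod p) (hb : b ≠ 0) :
    (X - C b) * qpoly p b = X ^ p - X := by
  have hCb : (C b : Polynomial (ZMod p)) * C b⁻¹ = 1 := by
    rw [← map_mul, mul_inv_cancel₀ hb, map_one]
  have hgeom := geom_sum_mul (C b⁻¹ * X : Polynomial (ZMod p)) p
  have hsum : (∑ i ∈ Finset.range p, (C b⁻¹ * X : Polynomial (ZMod p)) ^ i)
      = qpoly p b + 1 := by
    have hp1 : p - 1 + 1 = p := Nat.succ_pred_eq_of_pos hp.out.pos
    have hss := Finset.sum_range_succ' (fun i => (C b⁻¹ * X : Polynomial (ZMod p)) ^ i) (p - 1)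
    rw [hp1] at hss
    rw [hss, qpoly]
    simp only [mul_pow, ← C_pow, pow_zero]
  have hyp : (C b⁻¹ * X : Polynomial (ZMod p)) ^ p = C b⁻¹ * X ^ p := by
    rw [mul_pow, ← C_pow, ZMod.pow_card]
  rw [hsum, hyp] at hgeom
  linear_combination (C b) * hgeom + (X ^ p - X * qpoly p b - X) * hCb

theorem qpoly_comp (b : ZMod p) (hb : b ≠ 0) (hb1 : b - 1 ≠ 0) :
    (qpoly p b).comp (X + 1) = qpoly p (b - 1) := by
  apply mul_left_cancel₀ (Polynomial.X_sub_C_ne_zero (b - 1))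
  have h1 : (X - C (b - 1)) * (qpoly p b).comp (X + 1)
      = ((X - C b) * qpoly p b).comp (X + 1) := by
    rw [mul_comp, sub_comp, X_comp, C_comp, map_sub, map_one]
    ring
  rw [h1, X_sub_C_mul_qpoly p b hb, sub_comp, pow_comp, X_comp,
    add_pow_char, one_pow, X_sub_C_mul_qpoly p (b - 1) hb1]
  ring

theorem L_X_mul_qpoly (b : ZMod p) (hb : b ≠ 0) :
    L p (X * qpoly p b) = b * L p (qpoly p b) + 1 := by
  have h2 : (2 : ℕ) ≤ p := hp.out.two_le
  have e1 : p - 2 + 1 = p - 1 := by omega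
  have e2 : p - 2 + 2 = p := by omega
  have hbi : (b⁻¹ : ZMod p) ≠ 0 := inv_ne_zero hb
  have hbb : b * b⁻¹ = 1 := mul_inv_cancel₀ hb
  have hXq : X * qpoly p b = ∑ j ∈ Finset.range (p - 1), C (b⁻¹ ^ (j + 1)) * X ^ (j + 2) := by
    rw [qpoly, Finset.mul_sum]
    refine Finset.sum_congr rfl fun j _ => ?_
    ring
  have lhs : L p (X * qpoly p b)
      = ∑ j ∈ Finset.range (p - 1), (bell (j + 2) : ZMod p) * b⁻¹ ^ (j + 1) := by
    rw [hXq, L_sum]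
    refine Finset.sum_congr rfl fun j _ => ?_
    rw [L_C_mul, L_Xpow]
    ring
  have hL : ∑ j ∈ Finset.range (p - 1), (bell (j + 2) : ZMod p) * b⁻¹ ^ (j + 1)
      = (∑ j ∈ Finset.range (p - 2), (bell (j + 2) : ZMod p) * b⁻¹ ^ (j + 1)) + 2 := by
    rw [← e1, Finset.sum_range_succ, e1, e2, bell_p p, ZMod.pow_card_sub_one_eq_one hbi]
    ring
  have hR : b * (∑ j ∈ Finset.range (p - 1), (bell (j + 1) : ZMod p) * b⁻¹ ^ (j + 1))
      = 1 + ∑ j ∈ Finset.range (p - 2), (bell (j + 2) : ZMod p) * b⁻¹ ^ (j + 1) := by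
    rw [← e1, Finset.sum_range_succ', mul_add, Finset.mul_sum]
    have hterm : ∀ k, b * ((bell (k + 1 + 1) : ZMod p) * b⁻¹ ^ (k + 1 + 1))
        = (bell (k + 2) : ZMod p) * b⁻¹ ^ (k + 1) := by
      intro k
      rw [pow_succ]
      linear_combination ((bell (k + 2) : ZMod p) * b⁻¹ ^ (k + 1)) * hbb
    rw [Finset.sum_congr rfl fun k _ => hterm k]
    have h0 : b * ((bell (0 + 1) : ZMod p) * b⁻¹ ^ (0 + 1)) = 1 := by
      rw [bell_one]
      simpa using hbb
    rw [h0]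
    ring
  rw [lhs, hL, L_qpoly, hR]
  ring

theorem L_qpoly_neg_one : L p (qpoly p (-1)) = 1 := by
  have hne : (-1 : ZMod p) ≠ 0 := by
    simpa using (neg_ne_zero.mpr (one_ne_zero : (1 : ZMod p) ≠ 0))
  have hcast : ((p - 1 : ℕ) : ZMod p) = -1 := by
    rw [Nat.cast_sub hp.out.one_le, ZMod.natCast_self, Nat.cast_one]
    ring
  have hq : qpoly p (-1 : ZMod p) = ∏ i ∈ Finset.range (p - 1), (X - C (i : ZMod p)) := by
    apply mul_left_cancel₀ (Polynomial.X_sub_C_ne_zero (-1 : ZMod p))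
    rw [X_sub_C_mul_qpoly p (-1) hne]
    have h1 : (X - C (-1 : ZMod p)) * ∏ i ∈ Finset.range (p - 1), (X - C (i : ZMod p))
        = ∏ i ∈ Finset.range p, (X - C (i : ZMod p)) := by
      have hp1 : p - 1 + 1 = p := Nat.succ_pred_eq_of_pos hp.out.pos
      have hps := Finset.prod_range_succ (fun i => (X - C (i : ZMod p))) (p - 1)
      rw [hp1] at hps
      rw [hps, hcast]
      ring
    rw [h1, prod_range_eq p]
  rw [hq, L_fall]

theorem Icc_sum_eq (f : ℕ → ZMod p) :
    ∑ k ∈ Finset.Icc 1 (p - 1), f k = ∑ j ∈ Finset.range (p - 1), f (j + 1) := by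
  have hp1 : p - 1 + 1 = p := Nat.succ_pred_eq_of_pos hp.out.pos
  rw [← Finset.Ico_add_one_right_eq_Icc]
  rw [show p - 1 + 1 = p from hp1, Finset.sum_Ico_eq_sum_range]
  refine Finset.sum_congr (by rw [Nat.sub_one]) fun j _ => by rw [Nat.add_comm]

end BellSumAux2

/-- With `S m = ∑_{k=1}^{p-1} B_k ((-m)⁻¹)^k` in `ZMod p`, one has
`m * S m = S 1 - S (m+1)` for `1 ≤ m ≤ p-2`. -/
theorem bell_sum_recursion (p : ℕ) (hp : p.Prime)
    (S : ℕ → ZMod p)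
    (hS : ∀ m : ℕ, 0 < m → ¬ p ∣ m →
      S m = ∑ k ∈ Finset.Icc 1 (p - 1), (bell k : ZMod p) * ((-(m : ZMod p))⁻¹) ^ k)
    (m : ℕ) (hm1 : 1 ≤ m) (hm2 : m ≤ p - 2) :
    (m : ZMod p) * S m = S 1 - S (m + 1) := by
  haveI : Fact p.Prime := ⟨hp⟩
  have hp2 : 2 ≤ p := hp.two_le
  have hp3 : 3 ≤ p := by omega
  have hdvd : ¬ p ∣ m := fun h => by
    have := Nat.le_of_dvd (by omega) h
    omega
  have hdvd1 : ¬ p ∣ (m + 1) := fun h => by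
    have := Nat.le_of_dvd (by omega) h
    omega
  have hdvdone : ¬ p ∣ 1 := fun h => by
    have := Nat.le_of_dvd one_pos h
    omega
  set b : ZMod p := -(m : ZMod p) with hbdef
  have hb : b ≠ 0 := by
    rw [hbdef, neg_ne_zero]
    intro h
    exact hdvd ((ZMod.natCast_eq_zero_iff m p).mp h)
  have hb1cast : b - 1 = -(((m + 1 : ℕ) : ZMod p)) := by
    rw [hbdef]
    push_cast
    ring
  have hb1 : b - 1 ≠ 0 := by
    rw [hb1cast, neg_ne_zero]
    intro h
    exact hdvd1 ((ZMod.natCast_eq_zero_iff (m + 1) p).mp h)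
  -- identify the three sums with L (qpoly _)
  have hSm : S m = BellSumAux.L p (BellSumAux2.qpoly p b) := by
    rw [hS m (by omega) hdvd, BellSumAux2.L_qpoly,
      BellSumAux2.Icc_sum_eq p (fun k => (bell k : ZMod p) * ((-(m : ZMod p))⁻¹) ^ k)]
  have hSm1 : S (m + 1) = BellSumAux.L p (BellSumAux2.qpoly p (b - 1)) := by
    rw [hS (m + 1) (by omega) hdvd1, BellSumAux2.L_qpoly,
      BellSumAux2.Icc_sum_eq p
        (fun k => (bell k : ZMod p) * ((-((m + 1 : ℕ) : ZMod p))⁻¹) ^ k), hb1cast]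
  have hS1 : S 1 = 1 := by
    rw [hS 1 one_pos hdvdone,
      BellSumAux2.Icc_sum_eq p (fun k => (bell k : ZMod p) * ((-((1 : ℕ) : ZMod p))⁻¹) ^ k)]
    have h1 := BellSumAux2.L_qpoly_neg_one p
    rw [BellSumAux2.L_qpoly] at h1
    rw [← h1]
    norm_num
  -- the key recursion
  have hkey : BellSumAux.L p (BellSumAux2.qpoly p (b - 1))
      = b * BellSumAux.L p (BellSumAux2.qpoly p b) + 1 := by
    rw [← BellSumAux2.qpoly_comp p b hb hb1, ← BellSumAux.L_shift,
      BellSumAux2.L_X_mul_qpoly p b hb]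
  rw [hS1, hSm, hSm1, hkey, hbdef]
  ring
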